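/- Let X be a topological space, let φ : ℝ → X → X be a continuous flow on X (i.e., φ is jointly continuous, φ_0 = id, and φ_{s+t} = φ_s ∘ φ_t for all s, t ∈ ℝ), let U ⊆ X be open, and let v ∈ X with v ∉ U such that φ_{t_0}(v) ∈ U for some t_0 > 0. Suppose that every connected component (t_{−1}, t_1) of the open set {t > 0 : φ_t(v) ∈ U} ⊆ ℝ is bounded, and that whenever the set {t > t_1 : φ_t(v) ∈ U} is nonempty, its infimum t_2 satisfies t_2 − t_1 ≥ (3/2)·(t_1 − t_{−1}). Then liminf_{T→∞} (1/T)·λ({t ∈ [0, T] : φ_t(v) ∈ U}) ≤ 2/3, where λ denotes Lebesgue measure on ℝ. -/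
import Mathlib


open Set Filter MeasureTheory

private lemma abs_key (S : Set ℝ) (hposS : S ⊆ Ioi 0)
    (hcomp : ∀ t ∈ S, ∃ a b : ℝ,
      connectedComponentIn S t = Ioo a b ∧
      ((S ∩ Ioi b).Nonempty → (3 / 2) * (b - a) ≤ sInf (S ∩ Ioi b) - b)) :
    ∀ R : ℝ, ∃ T ≥ R, (volume (S ∩ Icc 0 T)).toReal / T ≤ 2 / 3 := by
  intro R
  by_cases hbdd : ∃ M : ℝ, ∀ s ∈ S, s ≤ M
  · -- bounded case: ratio tends to 0
    obtain ⟨M, hM⟩ := hbdd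
    set M' := max M 1 with hM'
    have hM1 : (1 : ℝ) ≤ M' := le_max_right _ _
    refine ⟨max R (3 * M'), le_max_left _ _, ?_⟩
    set T := max R (3 * M') with hT
    have hTpos : 0 < T := lt_of_lt_of_le (by linarith) (le_max_right _ _)
    have hsub : S ∩ Icc 0 T ⊆ Icc 0 M' := fun s hs =>
      ⟨le_of_lt (hposS hs.1), le_trans (hM s hs.1) (le_max_left _ _)⟩
    have hvol : volume (S ∩ Icc 0 T) ≤ ENNReal.ofReal M' := by
      calc volume (S ∩ Icc 0 T) ≤ volume (Icc (0:ℝ) M') := measure_mono hsub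
        _ = ENNReal.ofReal M' := by rw [Real.volume_Icc, sub_zero]
    have hm : (volume (S ∩ Icc 0 T)).toReal ≤ M' :=
      ENNReal.toReal_le_of_le_ofReal (by linarith) hvol
    rw [div_le_iff₀ hTpos]
    have h3 : 3 * M' ≤ T := le_max_right _ _
    nlinarith [hm, h3, hM1]
  · -- unbounded case
    push_neg at hbdd
    have hunb : ∀ M : ℝ, ∃ s ∈ S, M < s := fun M => by
      obtain ⟨s, hs, h⟩ := hbdd M; exact ⟨s, hs, h⟩
    choose a b hab hgap using hcomp
    have hmem : ∀ t (ht : t ∈ S), t ∈ Ioo (a t ht) (b t ht) := fun t ht =>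
      (hab t ht) ▸ mem_connectedComponentIn ht
    have hsubS : ∀ t (ht : t ∈ S), Ioo (a t ht) (b t ht) ⊆ S := fun t ht =>
      (hab t ht) ▸ connectedComponentIn_subset S t
    have ha0 : ∀ t (ht : t ∈ S), 0 ≤ a t ht := by
      intro t ht
      by_contra h
      push_neg at h
      have h0 : (0:ℝ) ∈ Ioo (a t ht) (b t ht) :=
        ⟨h, lt_trans (hposS ht) (hmem t ht).2⟩
      exact lt_irrefl 0 (mem_Ioi.mp (hposS (hsubS t ht h0)))
    have hne : ∀ t (ht : t ∈ S), (S ∩ Ioi (b t ht)).Nonempty := by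
      intro t ht
      obtain ⟨s, hsS, hs⟩ := hunb (b t ht)
      exact ⟨s, hsS, hs⟩
    have hbdd' : ∀ t (ht : t ∈ S), BddBelow (S ∩ Ioi (b t ht)) :=
      fun t ht => ⟨b t ht, fun y hy => le_of_lt hy.2⟩
    have hgap' : ∀ t (ht : t ∈ S),
        b t ht + 3/2 * (b t ht - a t ht) ≤ sInf (S ∩ Ioi (b t ht)) := by
      intro t ht
      have := hgap t ht (hne t ht)
      linarith
    have hsInf_le : ∀ t (ht : t ∈ S) s, s ∈ S → b t ht < s →
        sInf (S ∩ Ioi (b t ht)) ≤ s := fun t ht s hs hbs =>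
      csInf_le (hbdd' t ht) ⟨hs, hbs⟩
    have hkey : ∀ t (ht : t ∈ S) s, s ∈ S → b t ht < s →
        b t ht + 3/2 * (b t ht - a t ht) ≤ s := fun t ht s hs hbs =>
      le_trans (hgap' t ht) (hsInf_le t ht s hs hbs)
    -- pick a component beyond R
    obtain ⟨t0, ht0S, ht0⟩ := hunb (max R 0)
    set x := sInf (S ∩ Ioi (b t0 ht0S)) with hxdef
    have hlen0 : 0 < b t0 ht0S - a t0 ht0S := by
      have h := hmem t0 ht0S; linarith [h.1, h.2]
    have hbx : b t0 ht0S < x := by have := hgap' t0 ht0S; linarith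
    have ht0b : t0 < b t0 ht0S := (hmem t0 ht0S).2
    have hxR : R ≤ x := by
      have : R ≤ max R 0 := le_max_left _ _
      linarith
    have hx0 : 0 < x := by
      have : (0:ℝ) ≤ max R 0 := le_max_right _ _
      linarith
    have hxS : x ∉ S := by
      intro hx
      have hax : a x hx < x := (hmem x hx).1
      have hbig : max (a x hx) (b t0 ht0S) < x := max_lt hax hbx
      obtain ⟨s, hs1, hs2⟩ := exists_between hbig
      have hsS : s ∈ S := hsubS x hx
        ⟨lt_of_le_of_lt (le_max_left _ _) hs1, lt_trans hs2 (hmem x hx).2⟩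
      have := hsInf_le t0 ht0S s hsS (lt_of_le_of_lt (le_max_right _ _) hs1)
      rw [← hxdef] at this
      linarith
    have hlim : ∀ y, x < y → ∃ s ∈ S, x < s ∧ s < y := by
      intro y hy
      obtain ⟨s, hs, hlt⟩ := Real.lt_sInf_add_pos (hne t0 ht0S)
        (show 0 < y - x by linarith)
      have hxs : x ≤ s := csInf_le (hbdd' t0 ht0S) hs
      refine ⟨s, hs.1, lt_of_le_of_ne hxs ?_, by rw [← hxdef] at hlt; linarith⟩
      intro h
      exact hxS (h ▸ hs.1)
    -- every component meeting (0,x) satisfies the expansion bound within x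
    have hCdata : ∀ t (ht : t ∈ S), t < x →
        b t ht + 3/2 * (b t ht - a t ht) ≤ x := by
      intro t ht htx
      have hlen : 0 < b t ht - a t ht := by
        have h := hmem t ht; linarith [h.1, h.2]
      have hb_ne : b t ht ≠ x := by
        intro h
        obtain ⟨s, hsS, hxs, hsy⟩ := hlim (x + 3/2 * (b t ht - a t ht)) (by linarith)
        have := hkey t ht s hsS (by rw [h]; exact hxs)
        rw [h] at this
        linarith
      have hblt : b t ht < x := by
        rcases lt_trichotomy (b t ht) x with h | h | h
        · exact h
        · exact absurd h hb_ne
        · exact absurd (hsubS t ht ⟨lt_trans (hmem t ht).1 htx, h⟩) hxS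
      by_contra hcon
      push_neg at hcon
      obtain ⟨s, hsS, hxs, hsy⟩ := hlim _ hcon
      have := hkey t ht s hsS (lt_trans hblt hxs)
      linarith
    -- the countable family of components meeting (0, x)
    set C : Set (Set ℝ) :=
      (fun q : ℚ => connectedComponentIn S (q : ℝ)) ''
        {q : ℚ | (q : ℝ) ∈ S ∧ (q : ℝ) < x} with hCdef
    have hCc : C.Countable := (Set.to_countable _).image _
    have hCprop : ∀ c ∈ C, ∃ α β : ℝ, c = Ioo α β ∧ 0 ≤ α ∧ α < β ∧
        Ioo α β ⊆ S ∧ β + 3/2 * (β - α) ≤ x ∧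
        (∀ s ∈ S, β < s → β + 3/2 * (β - α) ≤ s) := by
      rintro c ⟨q, hq, rfl⟩
      have hqS : (q : ℝ) ∈ S := hq.1
      exact ⟨a _ hqS, b _ hqS, (hab _ hqS).symm ▸ rfl, ha0 _ hqS,
        lt_trans (hmem _ hqS).1 (hmem _ hqS).2, hsubS _ hqS,
        hCdata _ hqS hq.2, fun s hs hbs => hkey _ hqS s hs hbs⟩
    choose! α β hcIoo hα0 hαβ hcS hcx hckey using hCprop
    -- covering
    have hcover : S ∩ Icc 0 x = ⋃ c ∈ C, c := by
      apply Subset.antisymm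
      · rintro s ⟨hsS, hs0, hsx⟩
        have hsx' : s < x := lt_of_le_of_ne hsx fun h => hxS (h ▸ hsS)
        have h1 : a s hsS < min (b s hsS) x :=
          lt_min (lt_trans (hmem s hsS).1 (hmem s hsS).2)
            (lt_trans (hmem s hsS).1 hsx')
        obtain ⟨q, hq1, hq2⟩ := exists_rat_btwn h1
        have hqIoo : (q : ℝ) ∈ Ioo (a s hsS) (b s hsS) :=
          ⟨hq1, lt_of_lt_of_le hq2 (min_le_left _ _)⟩
        have hqS : (q : ℝ) ∈ S := hsubS s hsS hqIoo
        have hqx : (q : ℝ) < x := lt_of_lt_of_le hq2 (min_le_right _ _)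
        refine mem_biUnion ⟨q, ⟨hqS, hqx⟩, rfl⟩ ?_
        have hcc : connectedComponentIn S s = connectedComponentIn S (q : ℝ) :=
          connectedComponentIn_eq (by rw [hab s hsS]; exact hqIoo)
        show s ∈ connectedComponentIn S (q : ℝ)
        rw [← hcc]
        exact mem_connectedComponentIn hsS
      · intro s hs
        simp only [mem_iUnion] at hs
        obtain ⟨c, hcC, hsc⟩ := hs
        rw [hcIoo c hcC] at hsc
        have hβx : β c < x := by
          have h1 := hcx c hcC; have h2 := hαβ c hcC; linarith
        exact ⟨hcS c hcC hsc, le_of_lt (lt_of_le_of_lt (hα0 c hcC) hsc.1),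
          le_of_lt (lt_trans hsc.2 hβx)⟩
    -- disjointness of components
    have hCdisj : C.PairwiseDisjoint id := by
      rintro c hc c' hc' hne
      obtain ⟨q, hq, rfl⟩ := hc
      obtain ⟨q', hq', rfl⟩ := hc'
      refine Set.disjoint_left.mpr fun p hp hp' => hne ?_
      simp only [id_eq] at hp hp'
      show connectedComponentIn S (q : ℝ) = connectedComponentIn S (q' : ℝ)
      rw [connectedComponentIn_eq hp, connectedComponentIn_eq hp']
    -- the expanded intervals
    set K : Set ℝ → Set ℝ := fun c => Ioo (α c) (α c + 5/2 * (β c - α c)) with hKdef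
    have hKsub : ∀ c ∈ C, K c ⊆ Ioo 0 x := by
      intro c hc p hp
      have h1 := hα0 c hc
      have h2 := hcx c hc
      constructor
      · exact lt_of_le_of_lt h1 hp.1
      · have := hp.2; linarith
    have horder : ∀ c ∈ C, ∀ c' ∈ C, β c ≤ α c' →
        α c + 5/2 * (β c - α c) ≤ α c' := by
      intro c hc c' hc' hle
      by_contra h
      push_neg at h
      have hαβ' := hαβ c' hc'
      have hαβc := hαβ c hc
      obtain ⟨s, hs1, hs2⟩ := exists_between
        (show α c' < min (β c') (α c + 5/2 * (β c - α c)) from lt_min hαβ' h)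
      have hsS : s ∈ S := hcS c' hc' ⟨hs1, lt_of_lt_of_le hs2 (min_le_left _ _)⟩
      have hbs : β c < s := lt_of_le_of_lt hle hs1
      have := hckey c hc s hsS hbs
      have hs3 : s < α c + 5/2 * (β c - α c) := lt_of_lt_of_le hs2 (min_le_right _ _)
      linarith
    have hKdisj : C.PairwiseDisjoint K := by
      intro c hc c' hc' hne
      have hdisj := hCdisj hc hc' hne
      rw [Function.onFun, id, id, hcIoo c hc, hcIoo c' hc'] at hdisj
      have hsep : β c ≤ α c' ∨ β c' ≤ α c := by
        by_contra h
        push_neg at h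
        obtain ⟨p, hp1, hp2⟩ := exists_between
          (show max (α c) (α c') < min (β c) (β c') from
            max_lt (lt_min (hαβ c hc) h.2) (lt_min h.1 (hαβ c' hc')))
        exact Set.disjoint_left.mp hdisj
          ⟨lt_of_le_of_lt (le_max_left _ _) hp1, lt_of_lt_of_le hp2 (min_le_left _ _)⟩
          ⟨lt_of_le_of_lt (le_max_right _ _) hp1, lt_of_lt_of_le hp2 (min_le_right _ _)⟩
      rw [Function.onFun]
      rcases hsep with h | h
      · have := horder c hc c' hc' h
        refine Set.disjoint_left.mpr fun p hp hp' => ?_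
        have h1 : p < α c + 5/2 * (β c - α c) := hp.2
        have h2 : α c' < p := hp'.1
        linarith
      · have := horder c' hc' c hc h
        refine Set.disjoint_left.mpr fun p hp hp' => ?_
        have h1 : p < α c' + 5/2 * (β c' - α c') := hp'.2
        have h2 : α c < p := hp.1
        linarith
    -- measure computation
    have hμU : volume (S ∩ Icc 0 x) = ∑' c : C, volume (c : Set ℝ) := by
      rw [hcover]
      exact measure_biUnion hCc hCdisj fun c hc => by
        show MeasurableSet c
        rw [hcIoo c hc]; exact measurableSet_Ioo
    have hμK : volume (⋃ c ∈ C, K c) = ∑' c : C, volume (K c) :=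
      measure_biUnion hCc hKdisj fun c _ => measurableSet_Ioo
    have hsum : ∑' c : C, volume (K c) =
        ENNReal.ofReal (5/2) * ∑' c : C, volume (c : Set ℝ) := by
      rw [← ENNReal.tsum_mul_left]
      apply tsum_congr
      rintro ⟨c, hc⟩
      show volume (K c) = ENNReal.ofReal (5/2) * volume c
      have h1 : volume (K c) = ENNReal.ofReal (5/2 * (β c - α c)) := by
        rw [show K c = Ioo (α c) (α c + 5/2 * (β c - α c)) from rfl, Real.volume_Ioo]
        congr 1
        ring
      have h2 : volume c = ENNReal.ofReal (β c - α c) := by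
        conv_lhs => rw [hcIoo c hc]
        rw [Real.volume_Ioo]
      rw [h1, h2, ← ENNReal.ofReal_mul (by norm_num : (0:ℝ) ≤ 5/2)]
    have hle : ENNReal.ofReal (5/2) * volume (S ∩ Icc 0 x) ≤ ENNReal.ofReal x := by
      rw [hμU, ← hsum, ← hμK]
      calc volume (⋃ c ∈ C, K c) ≤ volume (Ioo 0 x) :=
            measure_mono (iUnion₂_subset hKsub)
        _ = ENNReal.ofReal x := by rw [Real.volume_Ioo, sub_zero]
    have hm : 5/2 * (volume (S ∩ Icc 0 x)).toReal ≤ x := by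
      have h1 := ENNReal.toReal_mono ENNReal.ofReal_ne_top hle
      rw [ENNReal.toReal_mul, ENNReal.toReal_ofReal (by norm_num : (0:ℝ) ≤ 5/2),
        ENNReal.toReal_ofReal hx0.le] at h1
      exact h1
    refine ⟨x, hxR, ?_⟩
    rw [div_le_iff₀ hx0]
    have h0 : 0 ≤ (volume (S ∩ Icc 0 x)).toReal := ENNReal.toReal_nonneg
    linarith

theorem ergodic_nongeneric_stmt2 {X : Type*} [TopologicalSpace X]
    (φ : Flow ℝ X) (U : Set X) (hU : IsOpen U) (v : X) (hv : v ∉ U)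
    (hvisit : ∃ t₀ : ℝ, 0 < t₀ ∧ φ t₀ v ∈ U)
    (hcomp : ∀ t ∈ {s : ℝ | 0 < s ∧ φ s v ∈ U}, ∃ a b : ℝ,
      connectedComponentIn {s : ℝ | 0 < s ∧ φ s v ∈ U} t = Ioo a b ∧
      (({s : ℝ | b < s ∧ φ s v ∈ U}).Nonempty →
        (3 / 2) * (b - a) ≤ sInf {s : ℝ | b < s ∧ φ s v ∈ U} - b)) :
    liminf (fun T : ℝ => (volume {t ∈ Icc (0 : ℝ) T | φ t v ∈ U}).toReal / T) atTop
      ≤ 2 / 3 := by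
  set S : Set ℝ := {s : ℝ | 0 < s ∧ φ s v ∈ U} with hSdef
  have hposS : S ⊆ Ioi 0 := fun s hs => hs.1
  have hcomp' : ∀ t ∈ S, ∃ a b : ℝ,
      connectedComponentIn S t = Ioo a b ∧
      ((S ∩ Ioi b).Nonempty → (3 / 2) * (b - a) ≤ sInf (S ∩ Ioi b) - b) := by
    intro t ht
    obtain ⟨a, b, h1, h2⟩ := hcomp t ht
    have htmem : t ∈ Ioo a b := h1 ▸ mem_connectedComponentIn ht
    have hb0 : 0 < b := lt_trans ht.1 htmem.2
    have hset : {s : ℝ | b < s ∧ φ s v ∈ U} = S ∩ Ioi b := by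
      ext s
      constructor
      · rintro ⟨hs1, hs2⟩
        exact ⟨⟨lt_trans hb0 hs1, hs2⟩, hs1⟩
      · rintro ⟨⟨_, hs2⟩, hs1⟩
        exact ⟨hs1, hs2⟩
    refine ⟨a, b, h1, ?_⟩
    rw [← hset]
    exact h2
  have hfreq := abs_key S hposS hcomp'
  have hfeq : ∀ T : ℝ, {t ∈ Icc (0:ℝ) T | φ t v ∈ U} = S ∩ Icc 0 T := by
    intro T
    ext t
    simp only [mem_setOf_eq, mem_inter_iff, mem_Icc]
    constructor
    · rintro ⟨⟨h0, hT⟩, hU'⟩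
      have ht0 : 0 < t := by
        rcases lt_or_eq_of_le h0 with h | h
        · exact h
        · exact absurd (by rw [← h, Flow.map_zero_apply] at hU'; exact hU') hv
      exact ⟨⟨ht0, hU'⟩, h0, hT⟩
    · rintro ⟨⟨_, hU'⟩, hIcc⟩
      exact ⟨hIcc, hU'⟩
  apply liminf_le_of_frequently_le
  · apply frequently_atTop.mpr
    intro R
    obtain ⟨T, hTR, hT⟩ := hfreq R
    refine ⟨T, hTR, ?_⟩
    rw [hfeq T]
    exact hT
  · apply isBoundedUnder_of_eventually_ge (a := (0:ℝ))
    filter_upwards [eventually_ge_atTop (0:ℝ)] with T hT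
    positivity
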